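/- Let P be a finite set of n points in the Euclidean plane with n > 2. Then the number of distinct perpendicular bisectors determined by pairs of distinct points of P is at least n. -/

import Mathlib

/-- The perpendicular bisector of `a` and `b`, as a point set. -/
def bisector (a b : EuclideanSpace ℝ (Fin 2)) : Set (EuclideanSpace ℝ (Fin 2)) :=
  {x | dist x a = dist x b}


noncomputable section
open Complex

local notation "conj'" => starRingEnd ℂ

def bisC (a b : ℂ) : Set ℂ := {x | dist x a = dist x b}

def LinC (a b x : ℂ) : Prop :=
  x * (conj' b - conj' a) + conj' x * (b - a) = b * conj' b - a * conj' a

lemma mem_bisC_iff {a b x : ℂ} : x ∈ bisC a b ↔ LinC a b x := by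
  have h1 : x ∈ bisC a b ↔ Complex.normSq (x - a) = Complex.normSq (x - b) := by
    simp only [bisC, Set.mem_setOf_eq, Complex.dist_eq, Complex.norm_def]
    constructor
    · intro h
      have := congrArg (· ^ 2) h
      simpa [Real.sq_sqrt, Complex.normSq_nonneg] using this
    · intro h; rw [h]
  have h2 : Complex.normSq (x - a) = Complex.normSq (x - b) ↔
      (x - a) * conj' (x - a) = (x - b) * conj' (x - b) := by
    rw [Complex.mul_conj, Complex.mul_conj]
    exact_mod_cast Iff.rfl.symm |>.symm
  rw [h1, h2]
  unfold LinC
  simp only [map_sub]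
  constructor <;> intro h <;> linear_combination h

/-- coefficient of the reflection across bisC a b -/
def gam (a b : ℂ) : ℂ := -((a - b) / conj' (a - b))

def del (a b : ℂ) : ℂ := (a + b) / 2 + (a - b) / conj' (a - b) * conj' ((a + b) / 2)

/-- reflection across bisC a b -/
def sig (a b z : ℂ) : ℂ := gam a b * conj' z + del a b

lemma conj_ne {a b : ℂ} (h : a ≠ b) : conj' (a - b) ≠ 0 := by
  rw [map_sub, sub_ne_zero]
  exact fun hh => h ((starRingEnd ℂ).injective hh)

lemma sig_key (a b z : ℂ) (h : a ≠ b) :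
    (sig a b z - z) * (conj' a - conj' b) =
      (z * (conj' b - conj' a) + conj' z * (b - a)) - (b * conj' b - a * conj' a) := by
  have hc := conj_ne h
  rw [map_sub] at hc
  unfold sig gam del
  simp only [map_sub, map_add, map_div₀, Complex.conj_conj, map_ofNat]
  field_simp
  ring

lemma sig_fix_iff {a b z : ℂ} (h : a ≠ b) : sig a b z = z ↔ LinC a b z := by
  have hc := conj_ne h
  rw [map_sub, sub_ne_zero] at hc
  have key := sig_key a b z h
  unfold LinC
  constructor <;> intro hz
  · rw [hz, sub_self, zero_mul] at key
    linear_combination -key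
  · rw [hz, sub_self] at key
    rcases mul_eq_zero.1 key with h1 | h2
    · linear_combination h1
    · exact absurd (sub_eq_zero.1 h2) hc

lemma gam_mul {a b : ℂ} (h : a ≠ b) :
    gam a b * (conj' a - conj' b) = -(a - b) := by
  have hc := conj_ne h
  rw [map_sub] at hc
  unfold gam
  rw [map_sub, neg_mul, div_mul_cancel₀ _ hc]

lemma del_mul {a b : ℂ} (h : a ≠ b) :
    del a b * (conj' a - conj' b) =
      (a + b) / 2 * (conj' a - conj' b) + (a - b) * ((conj' a + conj' b) / 2) := by
  have hc := conj_ne h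
  rw [map_sub] at hc
  unfold del
  simp only [map_sub, map_add, map_div₀, map_ofNat]
  rw [add_mul, mul_right_comm, div_mul_cancel₀ _ hc]

lemma sig_fst {a b : ℂ} (h : a ≠ b) : sig a b a = b := by
  have hc := conj_ne h
  rw [map_sub, sub_ne_zero] at hc
  have e : (sig a b a - b) * (conj' a - conj' b) = 0 := by
    unfold sig
    linear_combination conj' a * gam_mul h + del_mul h
  rcases mul_eq_zero.1 e with h1 | h2
  · exact sub_eq_zero.1 h1
  · exact absurd (sub_eq_zero.1 h2) hc

lemma sig_snd {a b : ℂ} (h : a ≠ b) : sig a b b = a := by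
  have hc := conj_ne h
  rw [map_sub, sub_ne_zero] at hc
  have e : (sig a b b - a) * (conj' a - conj' b) = 0 := by
    unfold sig
    linear_combination conj' b * gam_mul h + del_mul h
  rcases mul_eq_zero.1 e with h1 | h2
  · exact sub_eq_zero.1 h1
  · exact absurd (sub_eq_zero.1 h2) hc

lemma gam_conj_mul {a b : ℂ} (h : a ≠ b) : gam a b * conj' (gam a b) = 1 := by
  have hc := conj_ne h
  have hab : a - b ≠ 0 := sub_ne_zero.2 h
  unfold gam
  rw [map_neg, map_div₀, Complex.conj_conj, neg_mul_neg, div_mul_div_comm,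
    mul_comm (a - b), div_self (mul_ne_zero hc hab)]

lemma gam_del {a b : ℂ} (h : a ≠ b) : gam a b * conj' (del a b) + del a b = 0 := by
  have hc := conj_ne h
  rw [map_sub] at hc
  have hab : a - b ≠ 0 := sub_ne_zero.2 h
  have d1 := del_mul h
  have d2 := congrArg conj' d1
  simp only [map_mul, map_add, map_sub, map_div₀, map_ofNat, Complex.conj_conj] at d2
  have g1 := gam_mul h
  have e : (gam a b * conj' (del a b) + del a b) * ((conj' a - conj' b) * (a - b)) = 0 := by
    linear_combination conj' (del a b) * (a - b) * g1 - (a - b) * d2 + (a - b) * d1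
  rcases mul_eq_zero.1 e with h1 | h2
  · exact h1
  · exact absurd h2 (mul_ne_zero hc hab)

lemma sig_invol {a b : ℂ} (h : a ≠ b) (z : ℂ) : sig a b (sig a b z) = z := by
  have e1 := gam_conj_mul h
  have e2 := gam_del h
  unfold sig
  rw [map_add, map_mul, Complex.conj_conj]
  linear_combination z * e1 + e2

lemma sig_fix_of_mem {a b z : ℂ} (h : a ≠ b) (hz : z ∈ bisC a b) : sig a b z = z :=
  (sig_fix_iff h).2 (mem_bisC_iff.1 hz)

lemma mid_mem (a b : ℂ) : (a + b) / 2 ∈ bisC a b := by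
  rw [mem_bisC_iff]
  unfold LinC
  simp only [map_add, map_div₀, map_ofNat]
  ring

lemma mid2_mem (a b : ℂ) : (a + b) / 2 + Complex.I * (b - a) ∈ bisC a b := by
  rw [mem_bisC_iff]
  unfold LinC
  simp only [map_add, map_sub, map_mul, map_div₀, map_ofNat, Complex.conj_I]
  ring

/-- two reflections with the same bisector line agree -/
lemma sig_eq_of_bis_eq {a b c d : ℂ} (hab : a ≠ b) (hcd : c ≠ d)
    (h : bisC a b = bisC c d) : gam a b = gam c d ∧ del a b = del c d := by
  set p := (a + b) / 2 with hp
  set q := (a + b) / 2 + Complex.I * (b - a) with hq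
  have hpq : p ≠ q := by
    rw [hp, hq, ne_eq, left_eq_add, mul_eq_zero]
    rintro (h1 | h2)
    · exact Complex.I_ne_zero h1
    · exact hab (sub_eq_zero.1 h2).symm
  have e1 : gam a b * conj' p + del a b = p := sig_fix_of_mem hab (mid_mem a b)
  have e2 : gam a b * conj' q + del a b = q := sig_fix_of_mem hab (mid2_mem a b)
  have e3 : gam c d * conj' p + del c d = p := sig_fix_of_mem hcd (h ▸ mid_mem a b)
  have e4 : gam c d * conj' q + del c d = q := sig_fix_of_mem hcd (h ▸ mid2_mem a b)
  have hg : gam a b = gam c d := by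
    have h5 : (gam a b - gam c d) * (conj' p - conj' q) = 0 := by
      linear_combination e1 - e2 - e3 + e4
    rcases mul_eq_zero.1 h5 with h6 | h7
    · exact sub_eq_zero.1 h6
    · exact absurd ((starRingEnd ℂ).injective (sub_eq_zero.1 h7)) hpq
  exact ⟨hg, by linear_combination e1 - e3 - conj' p * hg⟩

lemma sig_val_of_bis_eq {a b c d : ℂ} (hab : a ≠ b) (hcd : c ≠ d)
    (h : bisC a b = bisC c d) : sig c d a = b := by
  obtain ⟨hg, hd⟩ := sig_eq_of_bis_eq hab hcd h
  have : sig c d a = sig a b a := by unfold sig; rw [hg, hd]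
  rw [this, sig_fst hab]

lemma bis_right_inj {a b c : ℂ} (hab : a ≠ b) (hac : a ≠ c)
    (h : bisC a b = bisC a c) : b = c := by
  have := sig_val_of_bis_eq hab hac h
  rw [sig_fst hac] at this
  exact this.symm

theorem cardC (Q : Finset ℂ) (h3 : 2 < Q.card) :
    Q.card ≤ Set.ncard {L : Set ℂ | ∃ a ∈ Q, ∃ b ∈ Q, a ≠ b ∧ L = bisC a b} := by
  classical
  set PP : Finset (ℂ × ℂ) := (Q ×ˢ Q).filter (fun p => p.1 ≠ p.2) with hPP
  have memPP : ∀ p : ℂ × ℂ, p ∈ PP ↔ p.1 ∈ Q ∧ p.2 ∈ Q ∧ p.1 ≠ p.2 := by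
    intro p
    simp [hPP, Finset.mem_filter, Finset.mem_product, and_assoc]
  set SF : Finset (Set ℂ) := PP.image (fun p => bisC p.1 p.2) with hSF
  have hSeq : {L : Set ℂ | ∃ a ∈ Q, ∃ b ∈ Q, a ≠ b ∧ L = bisC a b} = ↑SF := by
    ext L
    simp only [Set.mem_setOf_eq, hSF, Finset.coe_image, Set.mem_image, Finset.mem_coe]
    constructor
    · rintro ⟨a, ha, b, hb, hab, rfl⟩
      exact ⟨(a, b), (memPP _).2 ⟨ha, hb, hab⟩, rfl⟩
    · rintro ⟨p, hp, rfl⟩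
      obtain ⟨h1, h2, h3'⟩ := (memPP _).1 hp
      exact ⟨p.1, h1, p.2, h2, h3', rfl⟩
  rw [hSeq, Set.ncard_coe_finset]
  by_contra hlt
  push_neg at hlt
  have hstep : ∀ a ∈ Q, (Q.erase a).image (fun x => bisC a x) = SF := by
    intro a ha
    apply Finset.eq_of_subset_of_card_le
    · intro L hL
      obtain ⟨x, hx, rfl⟩ := Finset.mem_image.1 hL
      exact Finset.mem_image.2 ⟨(a, x),
        (memPP _).2 ⟨ha, Finset.mem_of_mem_erase hx, (Finset.ne_of_mem_erase hx).symm⟩, rfl⟩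
    · have hinj : Set.InjOn (fun x => bisC a x) (Q.erase a) := by
        intro x hx y hy hxy
        exact bis_right_inj (Finset.ne_of_mem_erase (Finset.mem_coe.1 hx)).symm
          (Finset.ne_of_mem_erase (Finset.mem_coe.1 hy)).symm hxy
      rw [Finset.card_image_of_injOn hinj, Finset.card_erase_of_mem ha]
      omega
  have hclos : ∀ a ∈ Q, ∀ b ∈ Q, ∀ c ∈ Q, b ≠ c → sig b c a ∈ Q := by
    intro a ha b hb c hc hbc
    by_cases hab : a = b
    · subst hab
      rw [sig_fst hbc]; exact hc
    by_cases hac : a = c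
    · subst hac
      rw [sig_snd hbc]; exact hb
    · have hmem : bisC b c ∈ SF := Finset.mem_image.2 ⟨(b, c), (memPP _).2 ⟨hb, hc, hbc⟩, rfl⟩
      rw [← hstep a ha] at hmem
      obtain ⟨x, hx, hbx⟩ := Finset.mem_image.1 hmem
      have hax : a ≠ x := (Finset.ne_of_mem_erase hx).symm
      rw [sig_val_of_bis_eq hax hbc hbx]
      exact Finset.mem_of_mem_erase hx
  have hsiginj : ∀ b c : ℂ, b ≠ c → Function.Injective (sig b c) := by
    intro b c hbc x y hxy
    have := congrArg (sig b c) hxy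
    rwa [sig_invol hbc, sig_invol hbc] at this
  have himg : ∀ b ∈ Q, ∀ c ∈ Q, b ≠ c → Q.image (sig b c) = Q := by
    intro b hb c hc hbc
    apply Finset.eq_of_subset_of_card_le
    · intro y hy
      obtain ⟨a, ha, rfl⟩ := Finset.mem_image.1 hy
      exact hclos a ha b hb c hc hbc
    · rw [Finset.card_image_of_injective _ (hsiginj b c hbc)]
  have hsum : ∀ b ∈ Q, ∀ c ∈ Q, b ≠ c → ∑ q ∈ Q, sig b c q = ∑ q ∈ Q, q := by
    intro b hb c hc hbc
    have h1 : ∑ x ∈ Q.image (sig b c), x = ∑ q ∈ Q, sig b c q :=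
      Finset.sum_image (fun x _ y _ h => hsiginj b c hbc h)
    rw [← h1, himg b hb c hc hbc]
  have hn : (Q.card : ℂ) ≠ 0 := Nat.cast_ne_zero.2 (by omega)
  set g : ℂ := (∑ q ∈ Q, q) / (Q.card : ℂ) with hg
  have hgn : g * (Q.card : ℂ) = ∑ q ∈ Q, q := div_mul_cancel₀ _ hn
  have hcg : conj' g * (Q.card : ℂ) = conj' (∑ q ∈ Q, q) := by
    rw [hg, map_div₀, map_natCast, div_mul_cancel₀ _ hn]
  clear_value g
  have hfix : ∀ b ∈ Q, ∀ c ∈ Q, b ≠ c → sig b c g = g := by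
    intro b hb c hc hbc
    have h1 : ∑ q ∈ Q, sig b c q
        = gam b c * conj' (∑ q ∈ Q, q) + (Q.card : ℂ) * del b c := by
      unfold sig
      rw [Finset.sum_add_distrib, ← Finset.mul_sum, ← map_sum, Finset.sum_const,
        nsmul_eq_mul]
    have h2 : (∑ q ∈ Q, q) = gam b c * conj' (∑ q ∈ Q, q) + (Q.card : ℂ) * del b c :=
      (hsum b hb c hc hbc).symm.trans h1
    have e : sig b c g * (Q.card : ℂ) = g * (Q.card : ℂ) := by
      unfold sig
      rw [add_mul, mul_assoc, hcg, hgn]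
      linear_combination -h2
    exact mul_right_cancel₀ hn e
  -- every point of Q is equidistant pairs from g
  have hLin : ∀ b ∈ Q, ∀ c ∈ Q, b ≠ c → LinC b c g := by
    intro b hb c hc hbc
    exact (sig_fix_iff hbc).1 (hfix b hb c hc hbc)
  obtain ⟨q0, hq0⟩ : Q.Nonempty := Finset.card_pos.1 (by omega)
  set r : ℂ := (q0 - g) * conj' (q0 - g) with hrdef
  clear_value r
  have hr : ∀ q ∈ Q, (q - g) * conj' (q - g) = r := by
    intro q hq
    by_cases hqq : q = q0
    · rw [hqq, hrdef]
    · have hL := hLin q0 hq0 q hq (fun h => hqq h.symm)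
      unfold LinC at hL
      rw [hrdef]
      simp only [map_sub] at hL ⊢
      linear_combination -hL
  have hr0 : r ≠ 0 := by
    intro hr0
    obtain ⟨a, ha, b, hb, hab⟩ := Finset.one_lt_card.1 (by omega : 1 < Q.card)
    have key : ∀ q ∈ Q, q = g := by
      intro q hq
      have := (hr q hq).trans hr0
      rw [Complex.mul_conj] at this
      have h0 : Complex.normSq (q - g) = 0 := by exact_mod_cast this
      have := Complex.normSq_eq_zero.1 h0
      exact sub_eq_zero.1 this
    exact hab ((key a ha).trans (key b hb).symm)
  have hvne : ∀ q ∈ Q, q - g ≠ 0 := by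
    intro q hq h0
    exact hr0 (by rw [← hr q hq, h0, zero_mul])
  have hgr : ∀ b ∈ Q, ∀ c ∈ Q, b ≠ c → gam b c * r = (b - g) * (c - g) := by
    intro b hb c hc hbc
    have hb' := hr b hb
    have hc' := hr c hc
    have gm := gam_mul hbc
    have hcc : conj' b - conj' c ≠ 0 := by
      have := conj_ne hbc; rwa [map_sub] at this
    have e : (gam b c * r - (b - g) * (c - g)) * (conj' b - conj' c) = 0 := by
      simp only [map_sub] at hb' hc'
      linear_combination r * gm - (c - g) * hb' + (b - g) * hc'
    rcases mul_eq_zero.1 e with h1 | h2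
    · exact sub_eq_zero.1 h1
    · exact absurd h2 hcc
  have hsigd : ∀ a ∈ Q, ∀ b ∈ Q, ∀ c ∈ Q, b ≠ c →
      (sig b c a - g) * (a - g) = (b - g) * (c - g) := by
    intro a ha b hb c hc hbc
    have hfx := hfix b hb c hc hbc
    have ha' := hr a ha
    have hgr' := hgr b hb c hc hbc
    unfold sig at hfx ⊢
    simp only [map_sub] at ha'
    linear_combination (a - g) * hfx + gam b c * ha' + hgr'
  set V : Finset ℂ := Q.image (fun q => q - g) with hV
  have hVmem : ∀ x ∈ V, ∃ a ∈ Q, a - g = x := fun x hx => by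
    obtain ⟨a, ha, haa⟩ := Finset.mem_image.1 hx; exact ⟨a, ha, haa⟩
  have hV0 : ∀ x ∈ V, x ≠ 0 := by
    intro x hx
    obtain ⟨a, ha, rfl⟩ := hVmem x hx
    exact hvne a ha
  have hVcard : V.card = Q.card := Finset.card_image_of_injective _ sub_left_injective
  have hCL : ∀ x ∈ V, ∀ y ∈ V, ∀ z ∈ V, y ≠ z → y * z / x ∈ V := by
    intro x hx y hy z hz hyz
    obtain ⟨a, ha, rfl⟩ := hVmem x hx
    obtain ⟨b, hb, rfl⟩ := hVmem y hy
    obtain ⟨c, hc, rfl⟩ := hVmem z hz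
    have hbc : b ≠ c := fun h => hyz (by rw [h])
    refine Finset.mem_image.2 ⟨sig b c a, hclos a ha b hb c hc hbc, ?_⟩
    rw [eq_div_iff (hvne a ha)]
    exact hsigd a ha b hb c hc hbc
  set t : ℂ := q0 - g with htdef
  have htV : t ∈ V := Finset.mem_image.2 ⟨q0, hq0, rfl⟩
  have ht : t ≠ 0 := hV0 t htV
  have hdivinj : Function.Injective (fun x : ℂ => x / t) := fun a b hab => by
    field_simp at hab; exact hab
  set H : Finset ℂ := V.image (fun x => x / t) with hH
  have hHmem : ∀ x ∈ H, ∃ v ∈ V, v / t = x := fun x hx => by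
    obtain ⟨v, hv, hvv⟩ := Finset.mem_image.1 hx; exact ⟨v, hv, hvv⟩
  have hHcard : H.card = Q.card := by
    rw [hH, Finset.card_image_of_injective _ hdivinj, hVcard]
  have hH0 : ∀ x ∈ H, x ≠ 0 := by
    intro x hx
    obtain ⟨v, hv, rfl⟩ := hHmem x hx
    exact div_ne_zero (hV0 v hv) ht
  have hH1 : (1 : ℂ) ∈ H := Finset.mem_image.2 ⟨t, htV, div_self ht⟩
  have hHdiv : ∀ x ∈ H, ∀ y ∈ H, x / y ∈ H := by
    intro x hx y hy
    obtain ⟨p, hp, rfl⟩ := hHmem x hx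
    obtain ⟨s, hs, rfl⟩ := hHmem y hy
    have hp0 := hV0 p hp
    have hs0 := hV0 s hs
    have he : p / t / (s / t) = p / s := by field_simp
    rw [he]
    by_cases hpt : p = t
    · subst hpt
      have hcard2 : 1 ≤ (V \ {t, s}).card := by
        have h1 := Finset.le_card_sdiff ({t, s} : Finset ℂ) V
        have h2 : ({t, s} : Finset ℂ).card ≤ 2 := Finset.card_insert_le _ _ |>.trans (by simp)
        omega
      obtain ⟨u, hu⟩ := Finset.card_pos.1 hcard2
      rw [Finset.mem_sdiff] at hu
      obtain ⟨huV, hu2⟩ := hu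
      simp only [Finset.mem_insert, Finset.mem_singleton, not_or] at hu2
      obtain ⟨hut, hus⟩ := hu2
      have hu0 := hV0 u huV
      have hw1 : t * u / s ∈ V := hCL s hs t htV u huV (fun h => hut h.symm)
      have hw1t : t * u / s ≠ t := by
        rw [Ne, div_eq_iff hs0]
        intro hcon
        exact hus (mul_left_cancel₀ ht hcon)
      have hw : t * (t * u / s) / u ∈ V := hCL u huV t htV _ hw1 (fun h => hw1t h.symm)
      refine Finset.mem_image.2 ⟨t * (t * u / s) / u, hw, ?_⟩
      field_simp
    · have hw : p * t / s ∈ V := hCL s hs p hp t htV hpt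
      refine Finset.mem_image.2 ⟨p * t / s, hw, ?_⟩
      field_simp
  have hHmul : ∀ x ∈ H, ∀ y ∈ H, x * y ∈ H := by
    intro x hx y hy
    have hy0 := hH0 y hy
    have h1y : 1 / y ∈ H := hHdiv 1 hH1 y hy
    have : x * y = x / (1 / y) := by field_simp
    rw [this]
    exact hHdiv x hx (1 / y) h1y
  have hsq : ∀ h ∈ H, ∃ x ∈ H, x * x ≠ h := by
    intro h hh
    by_contra hcon
    push_neg at hcon
    have hsub : H ⊆ {(1 : ℂ), -1} := by
      intro x hx
      have e : (x - 1) * (x + 1) = 0 := by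
        linear_combination hcon x hx - hcon 1 hH1
      rcases mul_eq_zero.1 e with h1 | h2
      · simp [sub_eq_zero.1 h1]
      · simp [eq_neg_of_add_eq_zero_left h2]
    have := Finset.card_le_card hsub
    have h2 : ({(1 : ℂ), -1} : Finset ℂ).card ≤ 2 := Finset.card_insert_le _ _ |>.trans (by simp)
    omega
  -- the finset of products of displacements over distinct pairs
  set T : Finset ℂ := PP.image (fun p => (p.1 - g) * (p.2 - g)) with hT
  have hTeq : T = H.image (fun h => t * t * h) := by
    apply Finset.Subset.antisymm
    · intro z hz
      obtain ⟨p, hp, rfl⟩ := Finset.mem_image.1 hz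
      obtain ⟨h1, h2, h12⟩ := (memPP _).1 hp
      have hx : (p.1 - g) / t ∈ H :=
        Finset.mem_image.2 ⟨p.1 - g, Finset.mem_image.2 ⟨p.1, h1, rfl⟩, rfl⟩
      have hy : (p.2 - g) / t ∈ H :=
        Finset.mem_image.2 ⟨p.2 - g, Finset.mem_image.2 ⟨p.2, h2, rfl⟩, rfl⟩
      refine Finset.mem_image.2 ⟨_, hHmul _ hx _ hy, ?_⟩
      field_simp
    · intro z hz
      obtain ⟨h, hh, rfl⟩ := Finset.mem_image.1 hz
      obtain ⟨x, hx, hxx⟩ := hsq h hh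
      have hx0 := hH0 x hx
      have hy : h / x ∈ H := hHdiv h hh x hx
      have hxy : x ≠ h / x := by
        intro hcon
        rw [eq_div_iff hx0] at hcon
        exact hxx hcon
      obtain ⟨va, hvaV, hva⟩ := hHmem x hx
      obtain ⟨vb, hvbV, hvb⟩ := hHmem (h / x) hy
      obtain ⟨a, ha, haa⟩ := hVmem va hvaV
      obtain ⟨b, hb, hbb⟩ := hVmem vb hvbV
      have hab : a ≠ b := by
        intro hcon
        apply hxy
        rw [← hvb, ← hva, ← haa, ← hbb, hcon]
      refine Finset.mem_image.2 ⟨(a, b), (memPP _).2 ⟨ha, hb, hab⟩, ?_⟩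
      dsimp only
      rw [haa, hbb]
      have e1 : va = x * t := by rw [← hva]; field_simp
      have e2 : vb = h / x * t := by rw [← hvb]; field_simp
      rw [e1, e2]
      field_simp
  have hTcard : T.card = Q.card := by
    rw [hTeq, Finset.card_image_of_injective _ (mul_right_injective₀ (mul_ne_zero ht ht)),
      hHcard]
  -- compatibility: equal bisectors give equal products
  have hcompat : ∀ p ∈ PP, ∀ p' ∈ PP, bisC p.1 p.2 = bisC p'.1 p'.2 →
      (p.1 - g) * (p.2 - g) = (p'.1 - g) * (p'.2 - g) := by
    intro p hp p' hp' hbis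
    obtain ⟨h1, h2, h12⟩ := (memPP _).1 hp
    obtain ⟨h1', h2', h12'⟩ := (memPP _).1 hp'
    have hgam := (sig_eq_of_bis_eq h12 h12' hbis).1
    rw [← hgr p.1 h1 p.2 h2 h12, ← hgr p'.1 h1' p'.2 h2' h12', hgam]
  set gfun : Set ℂ → ℂ := fun L =>
    if hL : ∃ p, p ∈ PP ∧ bisC p.1 p.2 = L then (hL.choose.1 - g) * (hL.choose.2 - g)
    else 0 with hgfun
  have hgval : ∀ p ∈ PP, gfun (bisC p.1 p.2) = (p.1 - g) * (p.2 - g) := by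
    intro p hp
    have hEx : ∃ p', p' ∈ PP ∧ bisC p'.1 p'.2 = bisC p.1 p.2 := ⟨p, hp, rfl⟩
    rw [hgfun]
    dsimp only
    rw [dif_pos hEx]
    exact hcompat _ hEx.choose_spec.1 p hp hEx.choose_spec.2
  have hTimg : T = SF.image gfun := by
    apply Finset.Subset.antisymm
    · intro z hz
      obtain ⟨p, hp, rfl⟩ := Finset.mem_image.1 hz
      exact Finset.mem_image.2 ⟨bisC p.1 p.2,
        Finset.mem_image.2 ⟨p, hp, rfl⟩, hgval p hp⟩
    · intro z hz
      obtain ⟨L, hL, rfl⟩ := Finset.mem_image.1 hz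
      obtain ⟨p, hp, rfl⟩ := Finset.mem_image.1 hL
      rw [hgval p hp]
      exact Finset.mem_image.2 ⟨p, hp, rfl⟩
  have hfinal : T.card ≤ SF.card := hTimg ▸ Finset.card_image_le
  omega

end

/-- A finite set of `n > 2` points in the Euclidean plane determines at least `n` distinct
perpendicular bisectors. -/
theorem num_bisectors_ge_card (P : Finset (EuclideanSpace ℝ (Fin 2))) (h : 2 < P.card) :
    P.card ≤ Set.ncard {L : Set (EuclideanSpace ℝ (Fin 2)) |
      ∃ a ∈ P, ∃ b ∈ P, a ≠ b ∧ L = bisector a b} := by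
  classical
  set e : ℂ ≃ₗᵢ[ℝ] EuclideanSpace ℝ (Fin 2) := Complex.orthonormalBasisOneI.repr with he
  set Q : Finset ℂ := P.image ⇑e.symm with hQ
  have hQcard : Q.card = P.card := Finset.card_image_of_injective _ e.symm.injective
  have hbis : ∀ a b : ℂ, bisector (e a) (e b) = ⇑e '' bisC a b := by
    intro a b
    ext x
    constructor
    · intro hx
      refine ⟨e.symm x, ?_, by simp⟩
      have hd : dist x (e a) = dist x (e b) := hx
      rw [show x = e (e.symm x) by simp] at hd
      rw [e.dist_map, e.dist_map] at hd
      exact hd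
    · rintro ⟨y, hy, rfl⟩
      have hd : dist y a = dist y b := hy
      show dist (e y) (e a) = dist (e y) (e b)
      rw [e.dist_map, e.dist_map]
      exact hd
  have hset : {L : Set (EuclideanSpace ℝ (Fin 2)) | ∃ a ∈ P, ∃ b ∈ P, a ≠ b ∧ L = bisector a b}
      = (Set.image ⇑e) '' {L : Set ℂ | ∃ a ∈ Q, ∃ b ∈ Q, a ≠ b ∧ L = bisC a b} := by
    ext L
    simp only [Set.mem_setOf_eq, Set.mem_image]
    constructor
    · rintro ⟨a, ha, b, hb, hab, rfl⟩
      refine ⟨bisC (e.symm a) (e.symm b),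
        ⟨e.symm a, Finset.mem_image.2 ⟨a, ha, rfl⟩, e.symm b, Finset.mem_image.2 ⟨b, hb, rfl⟩,
          fun hc => hab (by simpa using congrArg ⇑e hc), rfl⟩, ?_⟩
      rw [← hbis]
      simp
    · rintro ⟨L', ⟨a, ha, b, hb, hab, rfl⟩, rfl⟩
      obtain ⟨a0, ha0, rfl⟩ := Finset.mem_image.1 ha
      obtain ⟨b0, hb0, rfl⟩ := Finset.mem_image.1 hb
      refine ⟨a0, ha0, b0, hb0, fun hc => hab (by rw [hc]), ?_⟩
      rw [← hbis]
      simp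
  rw [hset, Set.ncard_image_of_injective _ (Set.image_injective.mpr e.injective), ← hQcard]
  exact cardC Q (hQcard ▸ h)
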